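/- For m-Dyck paths P ∈ Dyck^m_{n1} and Q = Q_1 ×_0 ... ×_0 Q_r ∈ Dyck^m_{n2} with the Q_i prime, and weak compositions λ, γ of L(P) of length r+1, one has λ_j + ... + λ_r ≤ γ_j + ... + γ_r for all 1 ≤ j ≤ r if and only if P *_λ Q ≤ P *_γ Q in the m-Tamari order. -/

import Mathlib

def stepVal (m : ℕ) (b : Bool) : ℤ := if b then (m : ℤ) else -1

def pathSum (m : ℕ) (P : List Bool) : ℤ := (P.map (stepVal m)).sum

def IsDyck (m : ℕ) (P : List Bool) : Prop :=
  pathSum m P = 0 ∧ ∀ Q : List Bool, Q <+: P → 0 ≤ pathSum m Q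

def IsPrimePath (m : ℕ) (P : List Bool) : Prop :=
  P ≠ [] ∧ ¬ ∃ Q R : List Bool, Q ≠ [] ∧ R ≠ [] ∧ IsDyck m Q ∧ IsDyck m R ∧ P = Q ++ R

def Ltop (P : List Bool) : ℕ := (P.reverse.takeWhile (fun b => !b)).length

def concatAt (P Q : List Bool) (j : ℕ) : List Bool :=
  P.take (P.length - j) ++ Q ++ List.replicate j false

def TamariCovers (m : ℕ) (P P' : List Bool) : Prop :=
  ∃ A E B : List Bool, IsDyck m E ∧ E ≠ [] ∧
    (∀ E₁ E₂ : List Bool, E = E₁ ++ E₂ → E₁ ≠ [] → E₂ ≠ [] → ¬ IsDyck m E₁) ∧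
    P = A ++ false :: (E ++ B) ∧ P' = A ++ E ++ false :: B

/-- The `m`-Tamari order. -/
def TamariLE (m : ℕ) : List Bool → List Bool → Prop :=
  Relation.ReflTransGen (TamariCovers m)

/-- `P *_λ Q₁×₀…×₀Q_r`, given the list of pairs `[(λ_1,Q_1), …, (λ_r,Q_r)]`:
`((P ×_{λ_1+⋯+λ_r} Q_1) ×_{λ_2+⋯+λ_r} Q_2) ⋯ ×_{λ_r} Q_r`. -/
def starLam (P : List Bool) : List (ℕ × List Bool) → List Bool
  | [] => P
  | (a, Q) :: rest => starLam (concatAt P Q (a + (rest.map Prod.fst).sum)) rest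

/-! ### basic pathSum lemmas -/

lemma pathSum_nil (m : ℕ) : pathSum m [] = 0 := rfl

lemma pathSum_append (m : ℕ) (X Y : List Bool) :
    pathSum m (X ++ Y) = pathSum m X + pathSum m Y := by
  simp [pathSum]

lemma pathSum_replicate_false (m k : ℕ) :
    pathSum m (List.replicate k false) = -(k : ℤ) := by
  induction k with
  | zero => simp [pathSum]
  | succ n ih =>
      rw [List.replicate_succ]
      show pathSum m ([false] ++ List.replicate n false) = _
      rw [pathSum_append, ih]
      simp [pathSum, stepVal]

lemma neg_one_le_stepVal (m : ℕ) (b : Bool) : (-1 : ℤ) ≤ stepVal m b := by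
  cases b <;> simp [stepVal]

lemma pathSum_take_append (m : ℕ) (X Y : List Bool) (t : ℕ) :
    pathSum m ((X ++ Y).take t) = pathSum m (X.take t) + pathSum m (Y.take (t - X.length)) := by
  rw [List.take_append, pathSum_append]

lemma pathSum_take_succ_ge (m : ℕ) (L : List Bool) (u : ℕ) :
    pathSum m (L.take u) - 1 ≤ pathSum m (L.take (u + 1)) := by
  rw [List.take_succ, pathSum_append]
  have : (-1 : ℤ) ≤ pathSum m L[u]?.toList := by
    cases h : L[u]? with
    | none => simp [pathSum]
    | some b =>
        have := neg_one_le_stepVal m b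
        simpa [pathSum, stepVal] using this
  linarith

lemma pathSum_take_ge_neg (m : ℕ) (L : List Bool) (s : ℕ) :
    -(s : ℤ) ≤ pathSum m (L.take s) := by
  induction s with
  | zero => simp [pathSum]
  | succ n ih =>
      have := pathSum_take_succ_ge m L n
      push_cast
      linarith

lemma pathSum_take_of_length_le (m : ℕ) (L : List Bool) (t : ℕ) (h : L.length ≤ t) :
    pathSum m (L.take t) = pathSum m L := by
  rw [List.take_of_length_le h]

/-! ### body -/

def body (m : ℕ) : List (ℕ × List Bool) → List Bool
  | [] => []
  | (a, Q) :: rest => Q ++ List.replicate a false ++ body m rest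

lemma body_zip_cons (m c : ℕ) (l : List ℕ) (Q : List Bool) (Qs : List (List Bool)) :
    body m ((c :: l).zip (Q :: Qs)) = Q ++ List.replicate c false ++ body m (l.zip Qs) := rfl

lemma body_append (m : ℕ) (l₁ l₂ : List (ℕ × List Bool)) :
    body m (l₁ ++ l₂) = body m l₁ ++ body m l₂ := by
  induction l₁ with
  | nil => rfl
  | cons p rest ih => cases p; simp [body, ih]

lemma body_length (m : ℕ) (l : List (ℕ × List Bool)) :
    (body m l).length = (l.map Prod.fst).sum + (l.map (fun p => p.2.length)).sum := by
  induction l with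
  | nil => rfl
  | cons p rest ih => cases p; simp [body, ih]; omega

lemma body_pathSum (m : ℕ) (l : List (ℕ × List Bool))
    (h : ∀ p ∈ l, pathSum m p.2 = 0) :
    pathSum m (body m l) = -((l.map Prod.fst).sum : ℤ) := by
  induction l with
  | nil => simp [body, pathSum]
  | cons p rest ih =>
      cases p with
      | mk a Q =>
        have hQ : pathSum m Q = 0 := h (a, Q) (by simp)
        simp [body, pathSum_append, hQ, pathSum_replicate_false,
          ih (fun p hp => h p (by simp [hp]))]
        ring

/-! ### Ltop decomposition and starLam formula -/

lemma exists_Ltop_decomp (P : List Bool) :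
    ∃ C : List Bool, P = C ++ List.replicate (Ltop P) false := by
  refine ⟨(P.reverse.dropWhile (fun b => !b)).reverse, ?_⟩
  have h1 : P.reverse.takeWhile (fun b => !b) ++ P.reverse.dropWhile (fun b => !b)
      = P.reverse := List.takeWhile_append_dropWhile
  have h2 : P.reverse.takeWhile (fun b => !b)
      = List.replicate (Ltop P) false := by
    apply List.eq_replicate_of_mem
    intro b hb
    have := List.mem_takeWhile_imp hb
    simpa using this
  calc P = P.reverse.reverse := by simp
    _ = (P.reverse.takeWhile (fun b => !b) ++ P.reverse.dropWhile (fun b => !b)).reverse := by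
          rw [h1]
    _ = (P.reverse.dropWhile (fun b => !b)).reverse ++ List.replicate (Ltop P) false := by
          rw [List.reverse_append, h2]; simp [List.reverse_replicate]

lemma starLam_formula (m : ℕ) : ∀ (l : List (ℕ × List Bool)) (P₀ : List Bool),
    starLam (P₀ ++ List.replicate ((l.map Prod.fst).sum) false) l = P₀ ++ body m l := by
  intro l
  induction l with
  | nil => intro P₀; simp [starLam, body]
  | cons p rest ih =>
      intro P₀
      cases p with
      | mk a Q =>
        have hs : ((((a, Q) :: rest).map Prod.fst).sum) = a + (rest.map Prod.fst).sum := by simp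
        rw [hs]
        show starLam (concatAt (P₀ ++ List.replicate (a + (rest.map Prod.fst).sum) false) Q
          (a + (rest.map Prod.fst).sum)) rest = _
        have hc : concatAt (P₀ ++ List.replicate (a + (rest.map Prod.fst).sum) false) Q
            (a + (rest.map Prod.fst).sum)
            = (P₀ ++ Q ++ List.replicate a false) ++ List.replicate ((rest.map Prod.fst).sum) false := by
          unfold concatAt
          rw [List.length_append, List.length_replicate]
          have : P₀.length + (a + (rest.map Prod.fst).sum) - (a + (rest.map Prod.fst).sum)
              = P₀.length := by omega
          rw [this, List.take_left' rfl, List.replicate_add]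
          simp
        rw [hc, ih]
        simp [body]

/-! ### Dyck splitting and covers -/

lemma isDyck_of_isDyck_append (m : ℕ) (E₁ E₂ : List Bool)
    (h : IsDyck m (E₁ ++ E₂)) (h1 : IsDyck m E₁) : IsDyck m E₂ := by
  obtain ⟨hs, hpre⟩ := h
  obtain ⟨hs1, _⟩ := h1
  constructor
  · rw [pathSum_append] at hs; omega
  · intro T hT
    obtain ⟨t, ht⟩ := hT
    have hpref : (E₁ ++ T) <+: (E₁ ++ E₂) := ⟨t, by rw [List.append_assoc, ht]⟩
    have : 0 ≤ pathSum m (E₁ ++ T) := hpre _ hpref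
    rwa [pathSum_append, hs1, zero_add] at this

lemma prime_cover_cond (m : ℕ) (Q : List Bool) (hD : IsDyck m Q) (hP : IsPrimePath m Q) :
    ∀ E₁ E₂ : List Bool, Q = E₁ ++ E₂ → E₁ ≠ [] → E₂ ≠ [] → ¬ IsDyck m E₁ := by
  intro E₁ E₂ hQ h1 h2 hD1
  exact hP.2 ⟨E₁, E₂, h1, h2, hD1, isDyck_of_isDyck_append m E₁ E₂ (hQ ▸ hD) hD1, hQ⟩

lemma covers_move (m : ℕ) (Q A B : List Bool) (hD : IsDyck m Q) (hP : IsPrimePath m Q) :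
    TamariCovers m (A ++ false :: (Q ++ B)) (A ++ Q ++ false :: B) :=
  ⟨A, Q, B, hD, hP.1, prime_cover_cond m Q hD hP, rfl, by simp⟩

lemma tamariLE_append_left (m : ℕ) (A : List Bool) {W W' : List Bool}
    (h : TamariLE m W W') : TamariLE m (A ++ W) (A ++ W') := by
  induction h with
  | refl => exact Relation.ReflTransGen.refl
  | tail _ hc ih =>
      refine ih.tail ?_
      obtain ⟨A', E, B, h1, h2, h3, h4, h5⟩ := hc
      exact ⟨A ++ A', E, B, h1, h2, h3, by simp [h4], by simp [h5]⟩

lemma multiMove (m : ℕ) (Q : List Bool) (hD : IsDyck m Q) (hP : IsPrimePath m Q) :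
    ∀ (k : ℕ) (A B : List Bool),
    TamariLE m (A ++ List.replicate k false ++ Q ++ B) (A ++ Q ++ List.replicate k false ++ B) := by
  intro k
  induction k with
  | zero => intro A B; simp only [List.replicate_zero, List.append_nil]; exact Relation.ReflTransGen.refl
  | succ n ih =>
      intro A B
      have step : TamariCovers m (A ++ List.replicate (n+1) false ++ Q ++ B)
          ((A ++ List.replicate n false) ++ Q ++ false :: B) := by
        have := covers_move m Q (A ++ List.replicate n false) B hD hP
        have he : A ++ List.replicate (n+1) false ++ Q ++ B
            = (A ++ List.replicate n false) ++ false :: (Q ++ B) := by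
          rw [show n + 1 = n + 1 from rfl, List.replicate_succ']; simp
        rw [he]
        simpa using this
      have rest : TamariLE m ((A ++ List.replicate n false) ++ Q ++ false :: B)
          (A ++ Q ++ List.replicate (n+1) false ++ B) := by
        have := ih A (false :: B)
        have e1 : (A ++ List.replicate n false) ++ Q ++ false :: B
            = A ++ List.replicate n false ++ Q ++ false :: B := by simp
        have e2 : A ++ Q ++ List.replicate n false ++ false :: B
            = A ++ Q ++ List.replicate (n+1) false ++ B := by
          rw [List.replicate_succ']; simp
        rw [e1, ← e2]
        exact this
      exact (Relation.ReflTransGen.single step).trans rest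

/-! ### forward direction -/

lemma forward_main (m : ℕ) : ∀ (Qs : List (List Bool)),
    (∀ Q ∈ Qs, IsDyck m Q ∧ IsPrimePath m Q) →
    ∀ (a b : ℕ) (lam₁ gam₁ : List ℕ),
    lam₁.length = Qs.length → gam₁.length = Qs.length →
    a + lam₁.sum = b + gam₁.sum →
    (∀ j, (lam₁.drop j).sum ≤ (gam₁.drop j).sum) →
    TamariLE m (List.replicate a false ++ body m (lam₁.zip Qs))
      (List.replicate b false ++ body m (gam₁.zip Qs)) := by
  intro Qs
  induction Qs with
  | nil =>
      intro _ a b lam₁ gam₁ hl hg hsum _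
      simp only [List.length_nil] at hl hg
      rw [List.length_eq_zero_iff] at hl hg
      subst hl; subst hg
      simp at hsum
      subst hsum
      exact Relation.ReflTransGen.refl
  | cons Q Qs₁ ih =>
      intro hQ a b lam₁ gam₁ hl hg hsum hdom
      obtain ⟨c, lam₂, rfl⟩ : ∃ c lam₂, lam₁ = c :: lam₂ := by
        cases lam₁ with
        | nil => simp at hl
        | cons c l => exact ⟨c, l, rfl⟩
      obtain ⟨d, gam₂, rfl⟩ : ∃ d gam₂, gam₁ = d :: gam₂ := by
        cases gam₁ with
        | nil => simp at hg
        | cons d l => exact ⟨d, l, rfl⟩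
      have hQD := (hQ Q (by simp)).1
      have hQP := (hQ Q (by simp)).2
      have hab : b ≤ a := by
        have h0 := hdom 0
        simp [List.sum_cons] at h0 hsum
        omega
      -- step 1: move (a-b) zeros past Q
      have step1 : TamariLE m
          (List.replicate a false ++ body m ((c :: lam₂).zip (Q :: Qs₁)))
          ((List.replicate b false ++ Q) ++
            (List.replicate (c + (a - b)) false ++ body m (lam₂.zip Qs₁))) := by
        have := multiMove m Q hQD hQP (a - b) (List.replicate b false)
          (List.replicate c false ++ body m (lam₂.zip Qs₁))
        have e1 : List.replicate b false ++ List.replicate (a - b) false ++ Q ++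
            (List.replicate c false ++ body m (lam₂.zip Qs₁))
            = List.replicate a false ++ body m ((c :: lam₂).zip (Q :: Qs₁)) := by
          rw [← List.append_assoc, ← List.replicate_add]
          have : b + (a - b) = a := by omega
          rw [this]
          simp [body]
        have e2 : List.replicate b false ++ Q ++ List.replicate (a - b) false ++
            (List.replicate c false ++ body m (lam₂.zip Qs₁))
            = (List.replicate b false ++ Q) ++
              (List.replicate (c + (a - b)) false ++ body m (lam₂.zip Qs₁)) := by
          rw [show c + (a - b) = (a - b) + c by omega, List.replicate_add]
          simp only [List.append_assoc]
        rw [e1, e2] at this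
        exact this
      -- step 2: recurse
      have step2 : TamariLE m
          ((List.replicate b false ++ Q) ++
            (List.replicate (c + (a - b)) false ++ body m (lam₂.zip Qs₁)))
          ((List.replicate b false ++ Q) ++
            (List.replicate d false ++ body m (gam₂.zip Qs₁))) := by
        apply tamariLE_append_left
        apply ih (fun Q' hQ' => hQ Q' (by simp [hQ'])) (c + (a - b)) d lam₂ gam₂
          (by simpa using hl) (by simpa using hg)
        · have := hdom 1
          simp at this hsum ⊢
          omega
        · intro j
          have := hdom (j + 1)
          simpa using this
      have efinal : (List.replicate b false ++ Q) ++
          (List.replicate d false ++ body m (gam₂.zip Qs₁))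
          = List.replicate b false ++ body m ((d :: gam₂).zip (Q :: Qs₁)) := by
        simp [body]
      rw [efinal] at step2
      exact step1.trans step2

/-! ### heights are monotone along Tamari -/

lemma pathSum_take_false (m : ℕ) (u : ℕ) :
    pathSum m ([false].take u) = if u = 0 then 0 else -1 := by
  cases u with
  | zero => simp [pathSum]
  | succ n => simp [pathSum, stepVal]

lemma covers_height (m : ℕ) {W W' : List Bool} (h : TamariCovers m W W') :
    ∀ t, pathSum m (W.take t) ≤ pathSum m (W'.take t) := by
  obtain ⟨A, E, B, hE, hEne, _, rfl, rfl⟩ := h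
  intro t
  have hW : A ++ false :: (E ++ B) = A ++ [false] ++ E ++ B := by simp
  have hW' : A ++ E ++ false :: B = A ++ E ++ [false] ++ B := by simp
  rw [hW, hW']
  rw [pathSum_take_append, pathSum_take_append, pathSum_take_append,
    pathSum_take_append, pathSum_take_append, pathSum_take_append]
  simp only [List.length_append, List.length_singleton]
  set s := t - A.length with hs
  have e1 : t - (A.length + 1) = s - 1 := by omega
  have e2 : t - (A.length + 1 + E.length) = s - 1 - E.length := by omega
  have e3 : t - (A.length + E.length) = s - E.length := by omega
  have e4 : t - (A.length + E.length + 1) = s - E.length - 1 := by omega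
  rw [e1, e2, e3, e4]
  have hBeq : s - 1 - E.length = s - E.length - 1 := by omega
  rw [hBeq]
  have key : pathSum m ([false].take s) + pathSum m (E.take (s - 1))
      ≤ pathSum m (E.take s) + pathSum m ([false].take (s - E.length)) := by
    rcases Nat.eq_zero_or_pos s with h0 | hpos
    · rw [h0]; simp
    · rcases le_or_gt s E.length with hle | hlt
      · have : s - E.length = 0 := by omega
        rw [this]
        rw [pathSum_take_false, pathSum_take_false]
        rw [if_neg (show ¬ s = 0 by omega), if_pos rfl]
        have := pathSum_take_succ_ge m E (s - 1)
        have hs1 : s - 1 + 1 = s := by omega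
        rw [hs1] at this
        linarith
      · rw [pathSum_take_of_length_le m E s (by omega),
          pathSum_take_of_length_le m E (s-1) (by omega),
          pathSum_take_false, pathSum_take_false]
        rw [if_neg (show ¬ s = 0 by omega), if_neg (show ¬ s - E.length = 0 by omega)]
        linarith
  linarith

lemma tamariLE_height (m : ℕ) {W W' : List Bool} (h : TamariLE m W W') :
    ∀ t, pathSum m (W.take t) ≤ pathSum m (W'.take t) := by
  induction h with
  | refl => intro t; exact le_refl _
  | tail _ hc ih => intro t; exact (ih t).trans (covers_height m hc t)

/-! ### backward direction -/

lemma zip_split : ∀ (j : ℕ) (l : List ℕ) (L : List (List Bool)),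
    l.zip L = (l.take j).zip (L.take j) ++ (l.drop j).zip (L.drop j) := by
  intro j
  induction j with
  | zero => intro l L; simp
  | succ n ih =>
      intro l L
      cases l with
      | nil => simp
      | cons a l' =>
          cases L with
          | nil => simp
          | cons Q L' =>
              simp only [List.take_succ_cons, List.drop_succ_cons, List.zip_cons_cons]
              rw [ih l' L']
              rfl

lemma strict_take_bound (m : ℕ) (Q rest : List Bool) (hne : Q ≠ [])
    (hsum : pathSum m Q = 0) (hpre : ∀ T, T <+: Q → 0 ≤ pathSum m T)
    (d : ℕ) (hd : 1 ≤ d) :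
    -(d : ℤ) < pathSum m ((Q ++ rest).take d) := by
  rw [pathSum_take_append]
  rcases le_or_gt d Q.length with hle | hlt
  · have h0 : d - Q.length = 0 := by omega
    rw [h0]
    have : 0 ≤ pathSum m (Q.take d) := hpre _ (List.take_prefix d Q)
    simp only [List.take_zero, pathSum_nil]
    have : -(d:ℤ) < 0 := by
      have : (1:ℤ) ≤ d := by exact_mod_cast hd
      linarith
    linarith [hpre (Q.take d) (List.take_prefix d Q)]
  · rw [pathSum_take_of_length_le m Q d (by omega), hsum]
    have h1 : 1 ≤ Q.length := by
      cases Q with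
      | nil => exact absurd rfl hne
      | cons _ _ => simp
    have h2 := pathSum_take_ge_neg m rest (d - Q.length)
    have h3 : ((d - Q.length : ℕ) : ℤ) = (d : ℤ) - Q.length := by
      push_cast [Nat.cast_sub (by omega : Q.length ≤ d)]; ring
    rw [h3] at h2
    have : (1:ℤ) ≤ Q.length := by exact_mod_cast h1
    linarith

lemma backward_main (m : ℕ) (Qs' : List (List Bool)) (lam gam : List ℕ) (j : ℕ)
    (hlen : lam.length = Qs'.length) (hglen : gam.length = Qs'.length)
    (hsum : lam.sum = gam.sum)
    (hD : ∀ Q ∈ Qs', IsDyck m Q)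
    (hj : j < Qs'.length)
    (hQjne : ∃ Q rest, Qs'.drop j = Q :: rest ∧ Q ≠ [])
    (hheight : ∀ u, pathSum m ((body m (lam.zip Qs')).take u)
      ≤ pathSum m ((body m (gam.zip Qs')).take u)) :
    (lam.drop j).sum ≤ (gam.drop j).sum := by
  by_contra hcon
  push_neg at hcon
  -- translate to take-sums
  have htl : (lam.take j).sum + (lam.drop j).sum = lam.sum := List.sum_take_add_sum_drop lam j
  have htg : (gam.take j).sum + (gam.drop j).sum = gam.sum := List.sum_take_add_sum_drop gam j
  set a := (lam.take j).sum with ha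
  set a' := (gam.take j).sum with ha'
  have haa : a < a' := by omega
  set p := ((Qs'.take j).map List.length).sum with hp
  -- lengths and path sums of the initial bodies
  have hlam_take_len : (lam.take j).length = (Qs'.take j).length := by
    simp [List.length_take, hlen]
  have hgam_take_len : (gam.take j).length = (Qs'.take j).length := by
    simp [List.length_take, hglen]
  have hfstl : (((lam.take j).zip (Qs'.take j)).map Prod.fst) = lam.take j :=
    List.map_fst_zip (le_of_eq hlam_take_len)
  have hsndl : (((lam.take j).zip (Qs'.take j)).map Prod.snd) = Qs'.take j :=
    List.map_snd_zip (ge_of_eq hlam_take_len)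
  have hfstg : (((gam.take j).zip (Qs'.take j)).map Prod.fst) = gam.take j :=
    List.map_fst_zip (le_of_eq hgam_take_len)
  have hsndg : (((gam.take j).zip (Qs'.take j)).map Prod.snd) = Qs'.take j :=
    List.map_snd_zip (ge_of_eq hgam_take_len)
  have hDyckmem : ∀ pr ∈ (lam.take j).zip (Qs'.take j), pathSum m pr.2 = 0 := by
    intro pr hpr
    have := (List.of_mem_zip hpr).2
    exact (hD pr.2 (List.mem_of_mem_take this)).1
  have hDyckmemg : ∀ pr ∈ (gam.take j).zip (Qs'.take j), pathSum m pr.2 = 0 := by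
    intro pr hpr
    have := (List.of_mem_zip hpr).2
    exact (hD pr.2 (List.mem_of_mem_take this)).1
  have hlenl : (body m ((lam.take j).zip (Qs'.take j))).length = a + p := by
    rw [body_length, hfstl]
    have : (((lam.take j).zip (Qs'.take j)).map (fun pr => pr.2.length))
        = (Qs'.take j).map List.length := by
      rw [show (fun pr : ℕ × List Bool => pr.2.length) = List.length ∘ Prod.snd from rfl,
        ← List.map_map, hsndl]
    rw [this]
  have hleng : (body m ((gam.take j).zip (Qs'.take j))).length = a' + p := by
    rw [body_length, hfstg]
    have : (((gam.take j).zip (Qs'.take j)).map (fun pr => pr.2.length))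
        = (Qs'.take j).map List.length := by
      rw [show (fun pr : ℕ × List Bool => pr.2.length) = List.length ∘ Prod.snd from rfl,
        ← List.map_map, hsndg]
    rw [this]
  have hpsl : pathSum m (body m ((lam.take j).zip (Qs'.take j))) = -(a : ℤ) := by
    rw [body_pathSum m _ hDyckmem, hfstl]
  have hpsg : pathSum m (body m ((gam.take j).zip (Qs'.take j))) = -(a' : ℤ) := by
    rw [body_pathSum m _ hDyckmemg, hfstg]
  -- the key position
  set u : ℕ := p + a' with hu
  -- compute the gamma height at u
  have hgamheight : pathSum m ((body m (gam.zip Qs')).take u) = -(a' : ℤ) := by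
    rw [zip_split j gam Qs', body_append, pathSum_take_append, hleng]
    rw [pathSum_take_of_length_le m _ u (by rw [hleng]; omega)]
    have : u - (a' + p) = 0 := by omega
    rw [this, hpsg]
    simp [pathSum]
  -- compute/estimate the lambda height at u
  obtain ⟨Qj, Qrest, hdropQ, hQjne'⟩ := hQjne
  have hjlam : j < lam.length := by omega
  obtain ⟨c, lrest, hdropl⟩ : ∃ c lrest, lam.drop j = c :: lrest := by
    cases hld : lam.drop j with
    | nil => exfalso; have := List.drop_eq_nil_iff.mp hld; omega
    | cons c l => exact ⟨c, l, rfl⟩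
  have hQjDyck : IsDyck m Qj := by
    apply hD
    have : Qj ∈ Qs'.drop j := by rw [hdropQ]; simp
    exact List.mem_of_mem_drop this
  have hlamheight : -(a' : ℤ) < pathSum m ((body m (lam.zip Qs')).take u) := by
    rw [zip_split j lam Qs', body_append, pathSum_take_append, hlenl]
    rw [pathSum_take_of_length_le m _ u (by rw [hlenl]; omega), hpsl]
    have hd : u - (a + p) = a' - a := by omega
    rw [hd]
    have hbody : body m ((lam.drop j).zip (Qs'.drop j))
        = Qj ++ (List.replicate c false ++ body m (lrest.zip Qrest)) := by
      rw [hdropl, hdropQ, body_zip_cons]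
      simp [List.append_assoc]
    rw [hbody]
    have := strict_take_bound m Qj (List.replicate c false ++ body m (lrest.zip Qrest))
      hQjne' hQjDyck.1 hQjDyck.2 (a' - a) (by omega)
    have hcast : ((a' - a : ℕ) : ℤ) = (a' : ℤ) - a := by
      push_cast [Nat.cast_sub (le_of_lt haa)]; ring
    rw [hcast] at this
    linarith
  have := hheight u
  rw [hgamheight] at this
  linarith

/-- For weak compositions `λ, γ` of `L(P)` of length `r+1`,
`λ_j + ⋯ + λ_r ≤ γ_j + ⋯ + γ_r` for all `1 ≤ j ≤ r` iff
`P *_λ Q ≤ P *_γ Q` in the `m`-Tamari order. -/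
theorem starLam_tamari_le (m : ℕ) (hm : 1 ≤ m) (P : List Bool) (hP : IsDyck m P)
    (Qs : List (List Bool)) (hQne : Qs ≠ [])
    (hQ : ∀ Q ∈ Qs, IsDyck m Q ∧ IsPrimePath m Q)
    (lam gam : List ℕ)
    (hlamlen : lam.length = Qs.length + 1) (hgamlen : gam.length = Qs.length + 1)
    (hlamsum : lam.sum = Ltop P) (hgamsum : gam.sum = Ltop P) :
    (∀ j, 1 ≤ j → j ≤ Qs.length → (lam.drop j).sum ≤ (gam.drop j).sum)
      ↔ TamariLE m (starLam P (lam.tail.zip Qs)) (starLam P (gam.tail.zip Qs)) := by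
  obtain ⟨a, lam₁, rfl⟩ : ∃ a lam₁, lam = a :: lam₁ := by
    cases lam with
    | nil => simp at hlamlen
    | cons a l => exact ⟨a, l, rfl⟩
  obtain ⟨b, gam₁, rfl⟩ : ∃ b gam₁, gam = b :: gam₁ := by
    cases gam with
    | nil => simp at hgamlen
    | cons b l => exact ⟨b, l, rfl⟩
  have hl1 : lam₁.length = Qs.length := by simpa using hlamlen
  have hg1 : gam₁.length = Qs.length := by simpa using hgamlen
  obtain ⟨C, hC⟩ := exists_Ltop_decomp P
  have hsl : Ltop P = a + lam₁.sum := by simpa using hlamsum.symm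
  have hsg : Ltop P = b + gam₁.sum := by simpa using hgamsum.symm
  -- rewrite the two paths
  have hfsl : ((lam₁.zip Qs).map Prod.fst).sum = lam₁.sum := by
    rw [List.map_fst_zip (le_of_eq hl1)]
  have hfsg : ((gam₁.zip Qs).map Prod.fst).sum = gam₁.sum := by
    rw [List.map_fst_zip (le_of_eq hg1)]
  have hWl : starLam P ((a :: lam₁).tail.zip Qs)
      = C ++ (List.replicate a false ++ body m (lam₁.zip Qs)) := by
    have : P = (C ++ List.replicate a false)
        ++ List.replicate (((lam₁.zip Qs).map Prod.fst).sum) false := by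
      rw [hfsl, hC, hsl, List.replicate_add]; simp
    simp only [List.tail_cons]
    rw [this, starLam_formula m]
    simp
  have hWg : starLam P ((b :: gam₁).tail.zip Qs)
      = C ++ (List.replicate b false ++ body m (gam₁.zip Qs)) := by
    have : P = (C ++ List.replicate b false)
        ++ List.replicate (((gam₁.zip Qs).map Prod.fst).sum) false := by
      rw [hfsg, hC, hsg, List.replicate_add]; simp
    simp only [List.tail_cons]
    rw [this, starLam_formula m]
    simp
  rw [hWl, hWg]
  constructor
  · -- forward
    intro hdom
    apply tamariLE_append_left
    apply forward_main m Qs hQ a b lam₁ gam₁ hl1 hg1 (by omega)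
    intro j
    rcases le_or_gt (j + 1) Qs.length with hle | hlt
    · have := hdom (j + 1) (by omega) hle
      simpa using this
    · have h1 : lam₁.drop j = [] := List.drop_eq_nil_of_le (by omega)
      rw [h1]
      simp
  · -- backward
    intro hT j hj1 hj2
    -- heights
    have hheightW := tamariLE_height m hT
    have hbodyl : List.replicate a false ++ body m (lam₁.zip Qs)
        = body m ((a :: lam₁).zip ([] :: Qs)) := by
      rw [List.zip_cons_cons, body]
      simp
    have hbodyg : List.replicate b false ++ body m (gam₁.zip Qs)
        = body m ((b :: gam₁).zip ([] :: Qs)) := by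
      rw [List.zip_cons_cons, body]
      simp
    rw [hbodyl, hbodyg] at hheightW
    have hheight : ∀ u, pathSum m ((body m ((a :: lam₁).zip ([] :: Qs))).take u)
        ≤ pathSum m ((body m ((b :: gam₁).zip ([] :: Qs))).take u) := by
      intro u
      have := hheightW (C.length + u)
      rw [pathSum_take_append, pathSum_take_append] at this
      rw [List.take_of_length_le (by omega : C.length ≤ C.length + u)] at this
      have he : C.length + u - C.length = u := by omega
      rw [he] at this
      linarith
    have hD : ∀ Q ∈ ([] :: Qs), IsDyck m Q := by
      intro Q hQmem
      rcases List.mem_cons.mp hQmem with h | h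
      · subst h
        exact ⟨rfl, fun T hT => by
          rw [List.prefix_nil.mp hT]; exact le_refl _⟩
      · exact (hQ Q h).1
    have hQjne : ∃ Q rest, (([] :: Qs) : List (List Bool)).drop j = Q :: rest ∧ Q ≠ [] := by
      have hj' : j - 1 < Qs.length := by omega
      have hdq : (([] :: Qs) : List (List Bool)).drop j = Qs.drop (j - 1) := by
        have : j = (j - 1) + 1 := by omega
        rw [this]
        simp
      refine ⟨Qs[j-1], Qs.drop (j - 1 + 1), ?_, ?_⟩
      · rw [hdq, List.drop_eq_getElem_cons hj']
      · exact (hQ _ (Qs.getElem_mem hj')).2.1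
    exact backward_main m ([] :: Qs) (a :: lam₁) (b :: gam₁) j
      (by simpa using hlamlen) (by simpa using hgamlen) (by omega)
      hD (by simpa using by omega : j < ([] :: Qs).length) hQjne hheight
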